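/- If A, B ∈ SU(2) satisfy A*B*A⁻¹*B⁻¹ = -1, then there exists g ∈ SU(2) such that g*A*g⁻¹ = A₀ and g*B*g⁻¹ = B₀; i.e., every pair with commutator -1 is simultaneously conjugate to the standard pair (A₀, B₀). -/

import Mathlib

set_option maxHeartbeats 1000000


open Matrix Complex

/-- `SU2` is the special unitary group of 2×2 complex matrices of determinant 1. -/
abbrev SU2 := Matrix.specialUnitaryGroup (Fin 2) ℂ

/-- The group structure on the special unitary group, with inverse given by
the conjugate transpose. -/
noncomputable instance instGroupSUC (n : ℕ) : Group (Matrix.specialUnitaryGroup (Fin n) ℂ) where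
  inv A := ⟨star A.1, by
    obtain ⟨hu, hd⟩ := Matrix.mem_specialUnitaryGroup_iff.mp A.2
    refine Matrix.mem_specialUnitaryGroup_iff.mpr ⟨Unitary.star_mem hu, ?_⟩
    rw [Matrix.star_eq_conjTranspose, Matrix.det_conjTranspose, hd, star_one]⟩
  inv_mul_cancel A :=
    Subtype.ext (Unitary.star_mul_self_of_mem (Matrix.mem_specialUnitaryGroup_iff.mp A.2).1)

/-- The element `-1` of `SU(2)`. -/
noncomputable def negOne : SU2 := ⟨-1, by
  refine Matrix.mem_specialUnitaryGroup_iff.mpr ⟨⟨?_, ?_⟩, ?_⟩ <;>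
    simp [Matrix.det_neg]⟩

/-- The element `A₀ = diag(i, -i)` of `SU(2)`. -/
noncomputable def A₀ : SU2 := ⟨!![I, 0; 0, -I], by
  refine Matrix.mem_specialUnitaryGroup_iff.mpr ⟨⟨?_, ?_⟩, ?_⟩
  · ext i j
    fin_cases i <;> fin_cases j <;>
      simp [Matrix.mul_apply, Fin.sum_univ_succ, Matrix.conjTranspose_apply]
  · ext i j
    fin_cases i <;> fin_cases j <;>
      simp [Matrix.mul_apply, Fin.sum_univ_succ, Matrix.conjTranspose_apply]
  · simp [Matrix.det_fin_two_of]⟩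

/-- The element `B₀ = [[0,1],[-1,0]]` of `SU(2)`. -/
noncomputable def B₀ : SU2 := ⟨!![0, 1; -1, 0], by
  refine Matrix.mem_specialUnitaryGroup_iff.mpr ⟨⟨?_, ?_⟩, ?_⟩
  · ext i j
    fin_cases i <;> fin_cases j <;>
      simp [Matrix.mul_apply, Fin.sum_univ_succ, Matrix.conjTranspose_apply]
  · ext i j
    fin_cases i <;> fin_cases j <;>
      simp [Matrix.mul_apply, Fin.sum_univ_succ, Matrix.conjTranspose_apply]
  · simp [Matrix.det_fin_two_of]⟩

open Matrix Complex

private lemma su2_form {M : Matrix (Fin 2) (Fin 2) ℂ}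
    (hM : M ∈ Matrix.specialUnitaryGroup (Fin 2) ℂ) :
    M 1 1 = star (M 0 0) ∧ M 1 0 = -star (M 0 1) ∧
      M 0 0 * star (M 0 0) + M 0 1 * star (M 0 1) = 1 := by
  obtain ⟨hu, hd⟩ := Matrix.mem_specialUnitaryGroup_iff.mp hM
  obtain ⟨hu1, hu2⟩ := Unitary.mem_iff.mp hu
  have hinv : M⁻¹ = star M := Matrix.inv_eq_left_inv hu1
  have hadj : M⁻¹ = Matrix.adjugate M := by
    rw [Matrix.inv_def, hd]
    simp
  have hsa : star M = !![M 1 1, -M 0 1; -M 1 0, M 0 0] := by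
    rw [← hinv, hadj]
    rw [Matrix.eta_fin_two M, Matrix.adjugate_fin_two]
  have e1 : star (M 1 1) = M 0 0 := by
    have := congrFun (congrFun hsa 1) 1
    simpa [Matrix.conjTranspose_apply] using this
  have e2 : star (M 1 0) = -M 0 1 := by
    have := congrFun (congrFun hsa 0) 1
    simpa [Matrix.conjTranspose_apply] using this
  have h11 : M 1 1 = star (M 0 0) := by rw [← e1, star_star]
  have h10 : M 1 0 = -star (M 0 1) := by rw [← star_star (M 1 0), e2, star_neg]
  refine ⟨h11, h10, ?_⟩
  have hdet := hd
  rw [Matrix.det_fin_two] at hdet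
  rw [h11, h10] at hdet
  linear_combination hdet

private lemma stage1 {A : Matrix (Fin 2) (Fin 2) ℂ}
    (hA : A ∈ Matrix.specialUnitaryGroup (Fin 2) ℂ) (htr : Matrix.trace A = 0) :
    ∃ g ∈ Matrix.specialUnitaryGroup (Fin 2) ℂ, g * A * star g = !![I,0;0,-I] := by
  obtain ⟨h11, h10, hdet⟩ := su2_form hA
  have htr2 : A 0 0 + A 1 1 = 0 := by rw [Matrix.trace_fin_two] at htr; exact htr
  have hsa : star (A 0 0) = -(A 0 0) := by
    rw [h11] at htr2; linear_combination htr2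
  -- real/imaginary structure
  have hre : (A 0 0).re = 0 := by
    have := congrArg Complex.re hsa
    simp at this
    linarith
  set t : ℝ := (A 0 0).im with htdef
  have ha : A 0 0 = (t : ℝ) * I := by
    apply Complex.ext <;> simp [hre, htdef]
  set b : ℂ := A 0 1 with hbdef
  set c : ℂ := star b with hcdef
  have hsc : star c = b := star_star b
  have hbc : b * c = 1 - (t:ℂ)^2 := by
    rw [ha] at hdet
    simp only [star_mul', Complex.star_def, Complex.conj_ofReal, Complex.conj_I] at hdet
    linear_combination hdet + (t:ℂ)^2 * Complex.I_sq
  have hnormb : Complex.normSq b = 1 - t^2 := by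
    have : (Complex.normSq b : ℂ) = ((1 - t^2 : ℝ) : ℂ) := by
      rw [← Complex.mul_conj]
      push_cast
      exact hbc
    exact_mod_cast this
  have ht1 : t ≤ 1 := by nlinarith [Complex.normSq_nonneg b]
  -- entries of A
  have hA00 : A 0 0 = I * (t:ℂ) := by rw [ha]; ring
  have hA01 : A 0 1 = b := rfl
  have hA10 : A 1 0 = -c := by rw [h10]
  have hA11 : A 1 1 = -(I * (t:ℂ)) := by rw [h11, hsa, ha]; ring
  by_cases hcase : t = 1
  · -- A is already diag(I, -I)
    have hb0 : b = 0 := by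
      have : Complex.normSq b = 0 := by rw [hnormb, hcase]; ring
      exact Complex.normSq_eq_zero.mp this
    refine ⟨1, Submonoid.one_mem _, ?_⟩
    have : A = !![I, 0; 0, -I] := by
      ext i j
      fin_cases i <;> fin_cases j <;>
        simp [hA00, hA01, hA10, hA11, hb0, hcase, hcdef]
    rw [this]
    simp
  · have ht : t < 1 := lt_of_le_of_ne ht1 hcase
    set r : ℝ := Real.sqrt (2*(1-t)) with hrdef
    have hrpos : 0 < r := Real.sqrt_pos.mpr (by linarith)
    set R : ℂ := (r : ℂ) with hRdef
    have hRne : R ≠ 0 := by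
      simp [hRdef]
      exact_mod_cast hrpos.ne'
    have hRR : R * R = 2 - 2*(t:ℂ) := by
      have h1 : r * r = 2*(1-t) := Real.mul_self_sqrt (by linarith)
      rw [hRdef, ← Complex.ofReal_mul, h1]
      push_cast
      ring
    set T : ℂ := (t : ℂ) with hTdef
    set g : Matrix (Fin 2) (Fin 2) ℂ :=
      !![c/R, -I*(1-T)/R; -I*(1-T)/R, b/R] with hgdef
    have hsT : (starRingEnd ℂ) T = T := Complex.conj_ofReal t
    have hsR : (starRingEnd ℂ) R = R := Complex.conj_ofReal r
    have hsb' : (starRingEnd ℂ) b = c := rfl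
    have hsc' : (starRingEnd ℂ) c = b := hsc
    have hstarg : star g = !![b/R, I*(1-T)/R; I*(1-T)/R, c/R] := by
      ext i j
      fin_cases i <;> fin_cases j <;>
        simp [hgdef, Matrix.conjTranspose_apply, Complex.star_def, map_div₀,
          hsT, hsR, hsb', hsc', Complex.conj_I] <;> ring
    have hgU2 : g * star g = 1 := by
      rw [hstarg]
      ext i j
      fin_cases i <;> fin_cases j <;>
        simp [hgdef, Matrix.mul_apply, Fin.sum_univ_succ] <;>
        field_simp
      · linear_combination hbc - hRR + (2*T - T^2 - 1) * Complex.I_sq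
      · linear_combination
      · linear_combination
      · linear_combination (hbc - hRR) - (1-T)^2 * Complex.I_sq
    have hgU1 : star g * g = 1 := by
      rw [hstarg]
      ext i j
      fin_cases i <;> fin_cases j <;>
        simp [hgdef, Matrix.mul_apply, Fin.sum_univ_succ] <;>
        field_simp
      · linear_combination hbc - hRR + (2*T - T^2 - 1) * Complex.I_sq
      · linear_combination
      · linear_combination
      · linear_combination (hbc - hRR) - (1-T)^2 * Complex.I_sq
    have hgdet : g.det = 1 := by
      rw [hgdef, Matrix.det_fin_two_of]
      field_simp
      linear_combination hbc - hRR + (2*T - T^2 - 1) * Complex.I_sq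
    have hgmem : g ∈ Matrix.specialUnitaryGroup (Fin 2) ℂ :=
      Matrix.mem_specialUnitaryGroup_iff.mpr ⟨Unitary.mem_iff.mpr ⟨hgU1, hgU2⟩, hgdet⟩
    have hAeq : A = !![I*T, b; -c, -(I*T)] := by
      ext i j
      fin_cases i <;> fin_cases j
      · simpa using hA00
      · simpa using hA01
      · simpa using hA10
      · simpa using hA11
    have hswap : g * A = !![I,0;0,-I] * g := by
      rw [hAeq]
      ext i j
      fin_cases i <;> fin_cases j
      all_goals simp [hgdef, Matrix.mul_apply, Fin.sum_univ_succ]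
      all_goals field_simp
      · linear_combination
      · linear_combination hbc + (1 - T^2) * Complex.I_sq
      · linear_combination -hbc - (1-T^2) * Complex.I_sq
      · linear_combination
    refine ⟨g, hgmem, ?_⟩
    calc g * A * star g = !![I,0;0,-I] * g * star g := by rw [hswap]
    _ = !![I,0;0,-I] * (g * star g) := by rw [mul_assoc]
    _ = !![I,0;0,-I] := by rw [hgU2, mul_one]


/-- Every pair `(A, B)` in `SU(2)` with commutator `ABA⁻¹B⁻¹ = -1` is simultaneously
conjugate to the standard pair `(A₀, B₀)`. -/
theorem pair_with_commutator_negOne_conjugate_to_standard_pair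
    (A B : SU2) (h : A * B * A⁻¹ * B⁻¹ = negOne) :
    ∃ g : SU2, g * A * g⁻¹ = A₀ ∧ g * B * g⁻¹ = B₀ := by
  have hsAA : star A.1 * A.1 = 1 :=
    (Unitary.mem_iff.mp (Matrix.mem_specialUnitaryGroup_iff.mp A.2).1).1
  have hAAs : A.1 * star A.1 = 1 :=
    (Unitary.mem_iff.mp (Matrix.mem_specialUnitaryGroup_iff.mp A.2).1).2
  have hsBB : star B.1 * B.1 = 1 :=
    (Unitary.mem_iff.mp (Matrix.mem_specialUnitaryGroup_iff.mp B.2).1).1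
  have hBBs : B.1 * star B.1 = 1 :=
    (Unitary.mem_iff.mp (Matrix.mem_specialUnitaryGroup_iff.mp B.2).1).2
  have hm : A.1 * B.1 * star A.1 * star B.1 = (-1 : Matrix (Fin 2) (Fin 2) ℂ) :=
    congrArg Subtype.val h
  have h1 : A.1 * B.1 * star A.1 = -B.1 := by
    have := congrArg (fun M => M * B.1) hm
    simpa [mul_assoc, hsBB] using this
  have hAB : A.1 * B.1 = -(B.1 * A.1) := by
    have := congrArg (fun M => M * A.1) h1
    simpa [mul_assoc, hsAA] using this
  have hBA : B.1 * A.1 = -(A.1 * B.1) := by rw [hAB, neg_neg]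
  have h2 : B.1 * A.1 * star B.1 = -A.1 := by
    rw [hBA]
    simp [mul_assoc, hBBs]
  have htrA : Matrix.trace A.1 = 0 := by
    have hc := congrArg Matrix.trace h2
    rw [Matrix.trace_mul_cycle, hsBB, one_mul, Matrix.trace_neg] at hc
    linear_combination hc / 2
  obtain ⟨g₁, hg₁mem, hg₁⟩ := stage1 A.2 htrA
  set G : SU2 := ⟨g₁, hg₁mem⟩ with hGdef
  have hsGG : star g₁ * g₁ = 1 :=
    (Unitary.mem_iff.mp (Matrix.mem_specialUnitaryGroup_iff.mp hg₁mem).1).1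
  have hGGs : g₁ * star g₁ = 1 :=
    (Unitary.mem_iff.mp (Matrix.mem_specialUnitaryGroup_iff.mp hg₁mem).1).2
  have hcanc : ∀ X : Matrix (Fin 2) (Fin 2) ℂ, star g₁ * (g₁ * X) = X := fun X => by
    rw [← mul_assoc, hsGG, one_mul]
  set B' : Matrix (Fin 2) (Fin 2) ℂ := g₁ * B.1 * star g₁ with hB'def
  have hB'mem : B' ∈ Matrix.specialUnitaryGroup (Fin 2) ℂ := (G * B * G⁻¹).2
  have hanti : !![(I:ℂ),0;0,-I] * B' = -(B' * !![(I:ℂ),0;0,-I]) := by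
    rw [← hg₁, hB'def]
    have hmid : A.1 * (B.1 * star g₁) = -(B.1 * (A.1 * star g₁)) := by
      rw [← mul_assoc, ← mul_assoc, hAB, neg_mul]
    simp only [mul_assoc, hcanc]
    rw [hmid]
    simp [mul_assoc]
  obtain ⟨hB11, hB10, hBdet⟩ := su2_form hB'mem
  have hp : B' 0 0 = 0 := by
    have := congrFun (congrFun hanti 0) 0
    simp [Matrix.mul_apply, Fin.sum_univ_succ] at this
    linear_combination (-I/2) * this + B' 0 0 * Complex.I_sq
  set q : ℂ := B' 0 1 with hqdef
  have hq : q * star q = 1 := by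
    rw [hp] at hBdet
    linear_combination hBdet
  have hB'eq : B' = !![0, q; -star q, 0] := by
    ext i j
    fin_cases i <;> fin_cases j
    · simpa using hp
    · simp [hqdef]
    · simpa using hB10
    · simp [hB11, hp]
  obtain ⟨μ, hμ⟩ := IsAlgClosed.exists_pow_nat_eq q two_pos
  have hq' : q * (starRingEnd ℂ) q = 1 := by
    rw [← Complex.star_def]
    exact hq
  have hμq : μ * μ = q := by rw [← hμ]; ring
  have hsq : (starRingEnd ℂ) μ * (starRingEnd ℂ) μ = (starRingEnd ℂ) q := by
    rw [← _root_.map_mul]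
    exact congrArg (starRingEnd ℂ) hμq
  have hn2 : (Complex.normSq μ : ℂ) ^ 2 = 1 := by
    rw [← Complex.mul_conj]
    calc (μ * (starRingEnd ℂ) μ) ^ 2
        = (μ * μ) * ((starRingEnd ℂ) μ * (starRingEnd ℂ) μ) := by ring
      _ = q * (starRingEnd ℂ) q := by rw [hμq, hsq]
      _ = 1 := hq'
  have hnμ : Complex.normSq μ = 1 := by
    have h6 : (Complex.normSq μ) ^ 2 = 1 := by exact_mod_cast hn2
    nlinarith [Complex.normSq_nonneg μ]
  have hμs : μ * (starRingEnd ℂ) μ = 1 := by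
    rw [Complex.mul_conj, hnμ]
    norm_num
  have hsμμ : (starRingEnd ℂ) μ * μ = 1 := by rw [mul_comm]; exact hμs
  set D : Matrix (Fin 2) (Fin 2) ℂ := !![(starRingEnd ℂ) μ, 0; 0, μ] with hDdef
  have hstarD : star D = !![μ, 0; 0, (starRingEnd ℂ) μ] := by
    ext i j
    fin_cases i <;> fin_cases j <;>
      simp [hDdef, Matrix.conjTranspose_apply, Complex.star_def]
  have hDU1 : star D * D = 1 := by
    rw [hstarD]
    ext i j
    fin_cases i <;> fin_cases j <;>
      simp [hDdef, Matrix.mul_apply, Fin.sum_univ_succ, hμs, hsμμ]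
  have hDU2 : D * star D = 1 := by
    rw [hstarD]
    ext i j
    fin_cases i <;> fin_cases j <;>
      simp [hDdef, Matrix.mul_apply, Fin.sum_univ_succ, hμs, hsμμ]
  have hDdet : D.det = 1 := by
    rw [hDdef, Matrix.det_fin_two_of]
    simpa using hsμμ
  have hDmem : D ∈ Matrix.specialUnitaryGroup (Fin 2) ℂ :=
    Matrix.mem_specialUnitaryGroup_iff.mpr ⟨Unitary.mem_iff.mpr ⟨hDU1, hDU2⟩, hDdet⟩
  have hDA : D * !![(I:ℂ),0;0,-I] * star D = !![(I:ℂ),0;0,-I] := by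
    rw [hstarD]
    ext i j
    fin_cases i <;> fin_cases j <;>
      simp [hDdef, Matrix.mul_apply, Fin.sum_univ_succ]
    · linear_combination I * hsμμ
    · linear_combination I * hμs
  have hB'eq2 : B' = !![0, q; -(starRingEnd ℂ) q, 0] := by
    rw [hB'eq, Complex.star_def]
  have hDB : D * B' * star D = !![(0:ℂ), 1; -1, 0] := by
    rw [hstarD, hB'eq2]
    ext i j
    fin_cases i <;> fin_cases j <;>
      simp [hDdef, Matrix.mul_apply, Fin.sum_univ_succ]
    · linear_combination q * hsq + hq'
    · linear_combination (starRingEnd ℂ) q * hμq + hq'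
  refine ⟨(⟨D, hDmem⟩ : SU2) * G, Subtype.ext ?_, Subtype.ext ?_⟩
  · show (D * g₁) * A.1 * star (D * g₁) = A₀.1
    rw [Matrix.star_mul]
    have : (D * g₁) * A.1 * (star g₁ * star D) = D * (g₁ * A.1 * star g₁) * star D := by
      simp only [mul_assoc]
    rw [this, hg₁]
    exact hDA
  · show (D * g₁) * B.1 * star (D * g₁) = B₀.1
    rw [Matrix.star_mul]
    have : (D * g₁) * B.1 * (star g₁ * star D) = D * (g₁ * B.1 * star g₁) * star D := by
      simp only [mul_assoc]
    rw [this, ← hB'def]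
    exact hDB
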